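/- arXiv:1503.01273 — 2 statements merged into one kernel-verified Lean document; each statement's English description precedes it below -/
import Mathlib

section
/- Let f ∈ ℝ^{d_1×…×d_m} with f ≥ 0 and f ≠ 0, and 1 < p_1,…,p_m < ∞. Then there exists a singular vector x* ∈ S^d_+ of f such that Q(x*) = ‖f‖_{p_1,…,p_m}. -/
/-!
Common setup: tensors `f : (∀ i, Fin (d i)) → ℝ`, the induced multilinear form,
partial gradients, `ψ_q`, `ℓ^p` norms, Hölder conjugates, singular vectors,
(weak) irreducibility, the maps `σ_i`, `s_{i,k}`, `T_α`, `G`, the quantities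
`Q`, `‖f‖_{p_1,…,p_m}`, `Q_i`, `γ_i^±` and the Hilbert-type metric `μ`.
Points of `ℝ^{d-d_i}` are encoded as full tuples (the maps involved do not
depend on the `i`-th component), with conditions imposed only for `k ≠ i`.
-/

open Finset Filter

noncomputable section

namespace TensorPF

variable {m : ℕ} {d : Fin m → ℕ}

/-- The multilinear form induced by the tensor `f`. -/
def form (f : (∀ i, Fin (d i)) → ℝ) (x : ∀ i, Fin (d i) → ℝ) : ℝ :=
  ∑ j : ∀ i, Fin (d i), f j * ∏ i, x i (j i)

/-- The gradient of the multilinear form in its `i`-th argument. -/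
def grad (f : (∀ i, Fin (d i)) → ℝ) (i : Fin m) (x : ∀ i, Fin (d i) → ℝ) :
    Fin (d i) → ℝ :=
  fun ji => form f (Function.update x i (fun l => if l = ji then (1 : ℝ) else 0))

/-- `ψ_q(y)_j = |y_j|^(q-1) sign(y_j)`. -/
def psi (q : ℝ) {n : ℕ} (y : Fin n → ℝ) : Fin n → ℝ :=
  fun j => |y j| ^ (q - 1) * Real.sign (y j)

/-- The `ℓ^q`-norm on `Fin n → ℝ`. -/
def pnorm (q : ℝ) {n : ℕ} (y : Fin n → ℝ) : ℝ :=
  (∑ j, |y j| ^ q) ^ (1 / q)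

/-- The Hölder conjugate `q' = q/(q-1)`. -/
def conjExp (q : ℝ) : ℝ := q / (q - 1)

/-- `σ_i(x) = sign(f(x)) ψ_{p_i'}(∇_i f(x))`. -/
def sigma (f : (∀ i, Fin (d i)) → ℝ) (p : Fin m → ℝ) (i : Fin m)
    (x : ∀ i, Fin (d i) → ℝ) : Fin (d i) → ℝ :=
  fun ji => Real.sign (form f x) * psi (conjExp (p i)) (grad f i x) ji

/-- `Q(x) = |f(x)| / ∏ i ‖x_i‖_{p_i}`. -/
def Qform (f : (∀ i, Fin (d i)) → ℝ) (p : Fin m → ℝ)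
    (x : ∀ i, Fin (d i) → ℝ) : ℝ :=
  |form f x| / ∏ i, pnorm (p i) (x i)

/-- The projective tensor norm `‖f‖_{p_1,…,p_m} = sup Q`. -/
def tnorm (f : (∀ i, Fin (d i)) → ℝ) (p : Fin m → ℝ) : ℝ :=
  sSup {q : ℝ | ∃ x : ∀ i, Fin (d i) → ℝ, (∀ i, x i ≠ 0) ∧ q = Qform f p x}

/-- `x ∈ S^d` is a singular vector of `f` with singular value `lam` if
`σ_i(x) = lam^{p_i'-1} x_i` for all `i`. -/
def IsSingular (f : (∀ i, Fin (d i)) → ℝ) (p : Fin m → ℝ) (lam : ℝ)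
    (x : ∀ i, Fin (d i) → ℝ) : Prop :=
  (∀ i, pnorm (p i) (x i) = 1) ∧
  ∀ i ji, sigma f p i x ji = lam ^ (conjExp (p i) - 1) * x i ji

/-- `s_{i,k}(x) = ψ_{p_k'}(∇_k f(x_1,…,ψ_{p_i'}(∇_i f(x)),…,x_m))`. -/
def sik (f : (∀ i, Fin (d i)) → ℝ) (p : Fin m → ℝ) (i k : Fin m)
    (x : ∀ l, Fin (d l) → ℝ) : Fin (d k) → ℝ :=
  psi (conjExp (p k))
    (grad f k (Function.update x i (psi (conjExp (p i)) (grad f i x))))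

/-- The `m`-partite graph associated to a nonnegative tensor. -/
def wGraph (f : (∀ i, Fin (d i)) → ℝ) : SimpleGraph ((k : Fin m) × Fin (d k)) where
  Adj a b := a.1 ≠ b.1 ∧ ∃ j : ∀ l, Fin (d l), j a.1 = a.2 ∧ j b.1 = b.2 ∧ 0 < f j
  symm := by
    constructor
    rintro a b ⟨h, j, h1, h2, h3⟩
    exact ⟨h.symm, j, h2, h1, h3⟩
  loopless := by constructor; rintro a ⟨h, -⟩; exact h rfl

/-- `f ≥ 0` is weakly irreducible if its graph is connected. -/
def WeaklyIrreducible (f : (∀ i, Fin (d i)) → ℝ) : Prop := (wGraph f).Connected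

/-- `f ≥ 0` is irreducible. -/
def Irreducible (f : (∀ i, Fin (d i)) → ℝ) : Prop :=
  ∀ J : Set ((k : Fin m) × Fin (d k)), J.Nonempty → J ≠ Set.univ →
    ∃ (k : Fin m) (j : ∀ l, Fin (d l)),
      (⟨k, j k⟩ : (l : Fin m) × Fin (d l)) ∈ J ∧
      (∀ l, l ≠ k → (⟨l, j l⟩ : (l : Fin m) × Fin (d l)) ∉ J) ∧ 0 < f j

/-- `T_α(z) = α_0 z + (α_1 σ_1(z),…,α_m σ_m(z))`. -/
def Tmap (f : (∀ i, Fin (d i)) → ℝ) (p : Fin m → ℝ) (a0 : ℝ) (a : Fin m → ℝ)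
    (z : ∀ i, Fin (d i) → ℝ) : ∀ i, Fin (d i) → ℝ :=
  fun i ji => a0 * z i ji + a i * sigma f p i z ji

/-- `Q_i(x) = ‖∇_i f(x)‖_{p_i'} / ∏_{k ≠ i} ‖x_k‖_{p_k}`. -/
def Qi (f : (∀ i, Fin (d i)) → ℝ) (p : Fin m → ℝ) (i : Fin m)
    (x : ∀ l, Fin (d l) → ℝ) : ℝ :=
  pnorm (conjExp (p i)) (grad f i x) / ∏ k ∈ Finset.univ.erase i, pnorm (p k) (x k)

/-- A critical point of `Q_i` with critical value `lam`. -/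
def IsCritQi (f : (∀ i, Fin (d i)) → ℝ) (p : Fin m → ℝ) (i : Fin m) (lam : ℝ)
    (x : ∀ l, Fin (d l) → ℝ) : Prop :=
  (∀ k, k ≠ i → pnorm (p k) (x k) = 1) ∧ grad f i x ≠ 0 ∧
  ∀ k, k ≠ i → ∀ jk,
    sik f p i k x jk = lam ^ (conjExp (p i) * (conjExp (p k) - 1)) * x k jk

/-- Collatz–Wielandt ratio `γ_i^-`. -/
def gammaMinus (f : (∀ i, Fin (d i)) → ℝ) (p : Fin m → ℝ) (i : Fin m)
    (x : ∀ l, Fin (d l) → ℝ) : ℝ :=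
  ∏ k ∈ Finset.univ.erase i, ⨅ jk : Fin (d k), (sik f p i k x jk / x k jk) ^ (p k - 1)

/-- Collatz–Wielandt ratio `γ_i^+`. -/
def gammaPlus (f : (∀ i, Fin (d i)) → ℝ) (p : Fin m → ℝ) (i : Fin m)
    (x : ∀ l, Fin (d l) → ℝ) : ℝ :=
  ∏ k ∈ Finset.univ.erase i, ⨆ jk : Fin (d k), (sik f p i k x jk / x k jk) ^ (p k - 1)

/-- The power-method map `G(x) = (s_{i,k}(x)/‖s_{i,k}(x)‖_{p_k})_{k≠i}`. -/
def Gmap (f : (∀ i, Fin (d i)) → ℝ) (p : Fin m → ℝ) (i : Fin m)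
    (x : ∀ l, Fin (d l) → ℝ) : ∀ l, Fin (d l) → ℝ :=
  fun k jk => sik f p i k x jk / pnorm (p k) (sik f p i k x)

/-- The Hilbert-type metric `μ` on `S^{d-d_i}_{++}`. -/
def mu (p : Fin m → ℝ) (i : Fin m) (x y : ∀ l, Fin (d l) → ℝ) : ℝ :=
  Real.log (∏ l ∈ Finset.univ.erase i,
    (⨆ jl : Fin (d l), (x l jl / y l jl) ^ (p l - 1)) /
    (⨅ jl : Fin (d l), (x l jl / y l jl) ^ (p l - 1)))



/-! ### Auxiliary lemmas -/

section Aux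
open Topology

variable {q : ℝ} {n : ℕ}

lemma sum_abs_rpow_nonneg (q : ℝ) (y : Fin n → ℝ) : (0:ℝ) ≤ ∑ j, |y j| ^ q :=
  Finset.sum_nonneg fun j _ => Real.rpow_nonneg (abs_nonneg _) _

lemma pnorm_nonneg (q : ℝ) (y : Fin n → ℝ) : 0 ≤ pnorm q y :=
  Real.rpow_nonneg (sum_abs_rpow_nonneg q y) _

lemma pnorm_rpow (hq : 0 < q) (y : Fin n → ℝ) :
    (pnorm q y) ^ q = ∑ j, |y j| ^ q := by
  rw [pnorm, ← Real.rpow_mul (sum_abs_rpow_nonneg q y), one_div,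
    inv_mul_cancel₀ (ne_of_gt hq), Real.rpow_one]

lemma sum_rpow_eq_one (hq : 0 < q) {y : Fin n → ℝ} (h : pnorm q y = 1) :
    ∑ j, |y j| ^ q = 1 := by
  rw [← pnorm_rpow hq, h, Real.one_rpow]

lemma pnorm_eq_zero_iff (hq : 0 < q) {y : Fin n → ℝ} :
    pnorm q y = 0 ↔ y = 0 := by
  constructor
  · intro h
    have hS0 : ∑ j, |y j| ^ q = 0 := by
      rw [← pnorm_rpow hq, h, Real.zero_rpow (ne_of_gt hq)]
    funext j
    have h2 := (Finset.sum_eq_zero_iff_of_nonneg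
      (fun j _ => Real.rpow_nonneg (abs_nonneg (y j)) q)).mp hS0 j (Finset.mem_univ j)
    have h3 : |y j| = 0 :=
      ((Real.rpow_eq_zero_iff_of_nonneg (abs_nonneg (y j))).mp h2).1
    simpa using h3
  · intro h; subst h
    simp [pnorm, Real.zero_rpow (ne_of_gt hq),
      Real.zero_rpow (inv_ne_zero (ne_of_gt hq)), one_div]

lemma pnorm_pos_of_ne_zero (hq : 0 < q) {y : Fin n → ℝ} (h : y ≠ 0) :
    0 < pnorm q y :=
  lt_of_le_of_ne (pnorm_nonneg q y) (fun h0 => h ((pnorm_eq_zero_iff hq).mp h0.symm))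

lemma pnorm_smul (hq : 0 < q) (c : ℝ) (y : Fin n → ℝ) :
    pnorm q (fun k => c * y k) = |c| * pnorm q y := by
  have h1 : ∀ j : Fin n, |c * y j| ^ q = |c| ^ q * |y j| ^ q := fun j => by
    rw [abs_mul, Real.mul_rpow (abs_nonneg _) (abs_nonneg _)]
  simp only [pnorm, h1, ← Finset.mul_sum]
  rw [Real.mul_rpow (by positivity) (sum_abs_rpow_nonneg q y),
    ← Real.rpow_mul (abs_nonneg c), mul_one_div_cancel (ne_of_gt hq), Real.rpow_one]

lemma pnorm_abs (q : ℝ) (y : Fin n → ℝ) : pnorm q (fun k => |y k|) = pnorm q y := by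
  simp [pnorm, abs_abs]

lemma pnorm_indicator (hq : 0 < q) (j0 : Fin n) :
    pnorm q (fun k => if k = j0 then (1:ℝ) else 0) = 1 := by
  have h1 : ∀ k : Fin n, |if k = j0 then (1:ℝ) else 0| ^ q = if k = j0 then 1 else 0 := by
    intro k
    by_cases h : k = j0 <;> simp [h, Real.zero_rpow (ne_of_gt hq)]
  simp [pnorm, h1]

variable {f : (∀ i, Fin (d i)) → ℝ}

lemma form_nonneg (hf : ∀ j, 0 ≤ f j) {x : ∀ i, Fin (d i) → ℝ}
    (hx : ∀ i k, 0 ≤ x i k) : 0 ≤ form f x :=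
  Finset.sum_nonneg fun j _ => mul_nonneg (hf j)
    (Finset.prod_nonneg fun i _ => hx i (j i))

lemma abs_form_le (hf : ∀ j, 0 ≤ f j) (x : ∀ i, Fin (d i) → ℝ) :
    |form f x| ≤ form f (fun i k => |x i k|) := by
  refine le_trans (Finset.abs_sum_le_sum_abs _ _) (le_of_eq ?_)
  refine Finset.sum_congr rfl fun j _ => ?_
  rw [abs_mul, abs_of_nonneg (hf j), Finset.abs_prod]

lemma form_smul (c : Fin m → ℝ) (x : ∀ i, Fin (d i) → ℝ) :
    form f (fun i k => c i * x i k) = (∏ i, c i) * form f x := by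
  simp only [form, Finset.mul_sum]
  refine Finset.sum_congr rfl fun j _ => ?_
  rw [Finset.prod_mul_distrib]; ring

lemma form_update (x : ∀ i, Fin (d i) → ℝ) (i : Fin m) (y : Fin (d i) → ℝ) :
    form f (Function.update x i y) = ∑ k, y k * grad f i x k := by
  have key : ∀ z : Fin (d i) → ℝ, form f (Function.update x i z)
      = ∑ j : ∀ l, Fin (d l), f j * (z (j i) * ∏ l ∈ Finset.univ.erase i, x l (j l)) := by
    intro z
    refine Finset.sum_congr rfl fun j _ => ?_
    congr 1
    rw [← Finset.mul_prod_erase Finset.univ _ (Finset.mem_univ i)]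
    congr 1
    · simp
    · refine Finset.prod_congr rfl fun l hl => ?_
      rw [Function.update_of_ne (Finset.ne_of_mem_erase hl)]
  rw [key]
  have gkey : ∀ k, grad f i x k
      = ∑ j : ∀ l, Fin (d l), f j * ((if j i = k then (1:ℝ) else 0) * ∏ l ∈ Finset.univ.erase i, x l (j l)) := by
    intro k; rw [grad, key]
  simp only [gkey]
  simp only [Finset.mul_sum]
  rw [Finset.sum_comm]
  refine Finset.sum_congr rfl fun j _ => ?_
  rw [Finset.sum_eq_single (j i)]
  · simp; ring
  · intro k _ hk
    simp [Ne.symm hk]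
  · intro h; exact absurd (Finset.mem_univ _) h

lemma form_zero_of_slot_zero (i : Fin m) {x : ∀ l, Fin (d l) → ℝ}
    (h : x i = 0) : form f x = 0 := by
  refine Finset.sum_eq_zero fun j _ => ?_
  rw [Finset.prod_eq_zero (Finset.mem_univ i) (by rw [h]; rfl), mul_zero]

lemma grad_nonneg (hf : ∀ j, 0 ≤ f j) {x : ∀ i, Fin (d i) → ℝ}
    (hx : ∀ i k, 0 ≤ x i k) (i : Fin m) (k : Fin (d i)) : 0 ≤ grad f i x k := by
  refine form_nonneg hf fun l kl => ?_
  by_cases h : l = i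
  · subst h
    rw [Function.update_self]
    split <;> norm_num
  · rw [Function.update_of_ne h]; exact hx l kl

lemma continuous_form : Continuous (fun x : ∀ i, Fin (d i) → ℝ => form f x) := by
  unfold form
  exact continuous_finset_sum _ fun j _ => continuous_const.mul <|
    continuous_finset_prod _ fun i _ => (continuous_apply (j i)).comp (continuous_apply i)

lemma continuous_pnorm (hq : 0 < q) : Continuous (fun y : Fin n → ℝ => pnorm q y) := by
  unfold pnorm
  refine (Real.continuous_rpow_const (by positivity)).comp ?_
  exact continuous_finset_sum _ fun j _ =>
    (Real.continuous_rpow_const (le_of_lt hq)).comp (continuous_abs.comp (continuous_apply j))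

lemma exists_maximizer {p : Fin m → ℝ} (hp : ∀ k, 1 < p k) (f : (∀ i, Fin (d i)) → ℝ)
    (j0 : ∀ i, Fin (d i)) :
    ∃ x : ∀ i, Fin (d i) → ℝ, (∀ i k, 0 ≤ x i k) ∧ (∀ i, pnorm (p i) (x i) = 1) ∧
      ∀ y : ∀ i, Fin (d i) → ℝ, (∀ i k, 0 ≤ y i k) → (∀ i, pnorm (p i) (y i) = 1) →
        form f y ≤ form f x := by
  set K : Set (∀ i, Fin (d i) → ℝ) :=
    {x | (∀ i k, 0 ≤ x i k) ∧ ∀ i, pnorm (p i) (x i) = 1} with hK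
  have hpq : ∀ i, (0:ℝ) < p i := fun i => lt_trans one_pos (hp i)
  have hKne : K.Nonempty := by
    refine ⟨fun i k => if k = j0 i then 1 else 0, fun i k => by positivity, fun i => ?_⟩
    exact pnorm_indicator (hpq i) (j0 i)
  have hKcl : IsClosed K := by
    have hA : IsClosed {x : ∀ i, Fin (d i) → ℝ | ∀ i k, 0 ≤ x i k} := by
      have he : {x : ∀ i, Fin (d i) → ℝ | ∀ i k, 0 ≤ x i k}
          = ⋂ i, ⋂ k, {x : ∀ i, Fin (d i) → ℝ | 0 ≤ x i k} := by
        ext x; simp [Set.mem_iInter]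
      rw [he]
      exact isClosed_iInter fun i => isClosed_iInter fun k =>
        isClosed_le continuous_const (((continuous_apply k).comp (continuous_apply i)))
    have hB : IsClosed {x : ∀ i, Fin (d i) → ℝ | ∀ i, pnorm (p i) (x i) = 1} := by
      have he : {x : ∀ i, Fin (d i) → ℝ | ∀ i, pnorm (p i) (x i) = 1}
          = ⋂ i, {x : ∀ i, Fin (d i) → ℝ | pnorm (p i) (x i) = 1} := by
        ext x; simp [Set.mem_iInter]
      rw [he]
      exact isClosed_iInter fun i =>
        isClosed_eq ((continuous_pnorm (hpq i)).comp (continuous_apply i)) continuous_const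
    exact hA.inter hB
  have hKsub : K ⊆ Metric.closedBall 0 1 := by
    intro x hx
    rw [Metric.mem_closedBall, dist_zero_right]
    refine (pi_norm_le_iff_of_nonneg zero_le_one).mpr fun i => ?_
    refine (pi_norm_le_iff_of_nonneg zero_le_one).mpr fun k => ?_
    rw [Real.norm_eq_abs]
    by_contra hgt
    push_neg at hgt
    have h1 : (1:ℝ) < |x i k| ^ p i := by
      calc (1:ℝ) = 1 ^ p i := (Real.one_rpow _).symm
      _ < |x i k| ^ p i := by
          exact Real.rpow_lt_rpow (by norm_num) hgt (hpq i)
    have h2 : |x i k| ^ p i ≤ ∑ l, |x i l| ^ p i :=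
      Finset.single_le_sum (fun l _ => Real.rpow_nonneg (abs_nonneg _) _) (Finset.mem_univ k)
    rw [sum_rpow_eq_one (hpq i) (hx.2 i)] at h2
    linarith
  have hKcp : IsCompact K :=
    (isCompact_closedBall (0 : ∀ i, Fin (d i) → ℝ) 1).of_isClosed_subset hKcl hKsub
  obtain ⟨x, hxK, hmax⟩ := hKcp.exists_isMaxOn hKne
    (continuous_form (f := f)).continuousOn
  exact ⟨x, hxK.1, hxK.2, fun y h1 h2 => hmax ⟨h1, h2⟩⟩

lemma form_le_bound {p : Fin m → ℝ} (hp : ∀ k, 1 < p k) (hf : ∀ j, 0 ≤ f j)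
    {x : ∀ i, Fin (d i) → ℝ} (hx0 : ∀ i k, 0 ≤ x i k)
    (hmax : ∀ y : ∀ i, Fin (d i) → ℝ, (∀ i k, 0 ≤ y i k) →
      (∀ i, pnorm (p i) (y i) = 1) → form f y ≤ form f x)
    (z : ∀ i, Fin (d i) → ℝ) :
    |form f z| ≤ form f x * ∏ i, pnorm (p i) (z i) := by
  have hpq : ∀ i, (0:ℝ) < p i := fun i => lt_trans one_pos (hp i)
  have hM : 0 ≤ form f x := form_nonneg hf hx0
  by_cases hz : ∀ i, z i ≠ 0
  · have hc : ∀ i, 0 < pnorm (p i) (z i) := fun i => pnorm_pos_of_ne_zero (hpq i) (hz i)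
    set y : ∀ i, Fin (d i) → ℝ := fun i k => |z i k| / pnorm (p i) (z i) with hy
    have hyn : ∀ i, pnorm (p i) (y i) = 1 := by
      intro i
      have he : y i = fun k => (pnorm (p i) (z i))⁻¹ * |z i k| := by
        funext k; rw [hy]; ring
      rw [he, pnorm_smul (hpq i), pnorm_abs,
        abs_of_pos (inv_pos.mpr (hc i)), inv_mul_cancel₀ (ne_of_gt (hc i))]
    have hy0 : ∀ i k, 0 ≤ y i k := fun i k =>
      div_nonneg (abs_nonneg _) (le_of_lt (hc i))
    have h1 : form f (fun i k => |z i k|) = (∏ i, pnorm (p i) (z i)) * form f y := by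
      rw [← form_smul]
      congr 1; funext i k
      show |z i k| = pnorm (p i) (z i) * (|z i k| / pnorm (p i) (z i))
      rw [mul_comm, div_mul_cancel₀ _ (ne_of_gt (hc i))]
    calc |form f z| ≤ form f (fun i k => |z i k|) := abs_form_le hf z
      _ = (∏ i, pnorm (p i) (z i)) * form f y := h1
      _ ≤ (∏ i, pnorm (p i) (z i)) * form f x :=
          mul_le_mul_of_nonneg_left (hmax y hy0 hyn)
            (le_of_lt (Finset.prod_pos fun i _ => hc i))
      _ = form f x * ∏ i, pnorm (p i) (z i) := mul_comm _ _
  · push_neg at hz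
    obtain ⟨i, hi⟩ := hz
    rw [form_zero_of_slot_zero i hi, abs_zero]
    exact mul_nonneg hM (Finset.prod_nonneg fun l _ => pnorm_nonneg _ _)

lemma grad_eq {p : Fin m → ℝ} (hp : ∀ k, 1 < p k) (hf : ∀ j, 0 ≤ f j)
    {x : ∀ i, Fin (d i) → ℝ} (hx0 : ∀ i k, 0 ≤ x i k)
    (hxn : ∀ i, pnorm (p i) (x i) = 1)
    (hbound : ∀ z : ∀ i, Fin (d i) → ℝ,
      |form f z| ≤ form f x * ∏ i, pnorm (p i) (z i))
    (i : Fin m) (j : Fin (d i)) :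
    grad f i x j = form f x * (x i j) ^ (p i - 1) := by
  have hpi := hp i
  have hpq : (0:ℝ) < p i := lt_trans one_pos hpi
  set lam := form f x with hlam
  set g := grad f i x with hg
  have hM : 0 ≤ lam := form_nonneg hf hx0
  have stepA : ∀ y : Fin (d i) → ℝ, ∑ k, y k * g k ≤ lam * pnorm (p i) y := by
    intro y
    have h1 : ∑ k, y k * g k ≤ ∑ k, |y k| * g k :=
      Finset.sum_le_sum fun k _ =>
        mul_le_mul_of_nonneg_right (le_abs_self _) (grad_nonneg hf hx0 i k)
    have h2 : ∑ k, |y k| * g k = form f (Function.update x i (fun k => |y k|)) :=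
      (form_update x i _).symm
    have h3 := hbound (Function.update x i (fun k => |y k|))
    have h4 : ∏ l, pnorm (p l) (Function.update x i (fun k => |y k|) l)
        = pnorm (p i) y := by
      have he : (fun l => pnorm (p l) (Function.update x i (fun k => |y k|) l))
          = Function.update (fun l => pnorm (p l) (x l)) i (pnorm (p i) y) := by
        funext l
        by_cases hl : l = i
        · subst hl; rw [Function.update_self, Function.update_self, pnorm_abs]
        · rw [Function.update_of_ne hl, Function.update_of_ne hl]
      rw [he, Finset.prod_update_of_mem (Finset.mem_univ i)]
      rw [Finset.prod_congr rfl (fun l _ => hxn l), Finset.prod_const_one, mul_one]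
    rw [h4] at h3
    calc ∑ k, y k * g k ≤ ∑ k, |y k| * g k := h1
      _ ≤ |form f (Function.update x i fun k => |y k|)| := by rw [h2]; exact le_abs_self _
      _ ≤ lam * pnorm (p i) y := h3
  have stepB : ∑ k, x i k * g k = lam := by
    have hB := form_update (f := f) x i (x i)
    rw [Function.update_eq_self] at hB
    exact hB.symm
  set a := x i j with ha
  have ha0 : 0 ≤ a := hx0 i j
  set C := ∑ k ∈ Finset.univ.erase j, |x i k| ^ p i with hC
  have hCa : C + a ^ p i = 1 := by
    have h1 := sum_rpow_eq_one hpq (hxn i)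
    rw [← Finset.add_sum_erase Finset.univ _ (Finset.mem_univ j),
      abs_of_nonneg ha0] at h1
    linarith
  have stepD : ∀ t : ℝ, pnorm (p i) (fun k => x i k + t * (if k = j then 1 else 0))
      = (C + |a + t| ^ p i) ^ (1 / p i) := by
    intro t
    rw [pnorm]
    congr 1
    rw [add_comm C, ← Finset.add_sum_erase Finset.univ _ (Finset.mem_univ j)]
    congr 1
    · simp [ha]
    · refine Finset.sum_congr rfl fun k hk => ?_
      rw [if_neg (Finset.ne_of_mem_erase hk), mul_zero, add_zero]
  have stepE : ∀ t : ℝ, ∑ k, (x i k + t * (if k = j then 1 else 0)) * g k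
      = lam + t * g j := by
    intro t
    simp only [add_mul, Finset.sum_add_distrib, stepB]
    congr 1
    have he : ∀ k, (t * (if k = j then (1:ℝ) else 0)) * g k
        = if k = j then t * g k else 0 := by
      intro k; by_cases h : k = j <;> simp [h]
    simp only [he]
    rw [Finset.sum_ite_eq' Finset.univ j (fun k => t * g k)]
    simp
  set φ : ℝ → ℝ := fun t => lam * (C + |a + t| ^ p i) ^ (1 / p i) - (lam + t * g j)
    with hφ
  have hφ0 : ∀ t, 0 ≤ φ t := by
    intro t
    have hA := stepA (fun k => x i k + t * (if k = j then 1 else 0))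
    rw [stepD t, stepE t] at hA
    simpa [hφ] using sub_nonneg.mpr hA
  have hφzero : φ 0 = 0 := by
    simp [hφ, abs_of_nonneg ha0, hCa]
  rcases eq_or_lt_of_le ha0 with hA | hA
  · -- case a = 0
    have haz : a = 0 := hA.symm
    have hgj0 : 0 ≤ g j := grad_nonneg hf hx0 i j
    have hC1 : C = 1 := by
      rw [haz, Real.zero_rpow (ne_of_gt hpq), add_zero] at hCa; exact hCa
    have hub : ∀ t : ℝ, 0 < t → g j ≤ lam * t ^ (p i - 1) := by
      intro t ht
      have h1 := hφ0 t
      simp only [hφ] at h1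
      have h2 : (C + |a + t| ^ p i) ^ (1/p i) ≤ 1 + t ^ p i := by
        rw [hC1, haz, zero_add, abs_of_pos ht]
        calc (1 + t ^ p i) ^ (1/p i) ≤ (1 + t ^ p i) ^ (1:ℝ) :=
              Real.rpow_le_rpow_of_exponent_le
                (by have := Real.rpow_nonneg (le_of_lt ht) (p i); linarith)
                (by rw [div_le_one hpq]; linarith)
          _ = 1 + t ^ p i := Real.rpow_one _
      have h3 : lam + t * g j ≤ lam * (1 + t ^ p i) :=
        le_trans (by linarith) (mul_le_mul_of_nonneg_left h2 hM)
      have h4 : t * g j ≤ t * (lam * t ^ (p i - 1)) := by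
        have h5 : t * t ^ (p i - 1) = t ^ p i := by
          nth_rewrite 1 [← Real.rpow_one t]
          rw [← Real.rpow_add ht]
          norm_num
        nlinarith [h3, h5]
      exact le_of_mul_le_mul_left h4 ht
    have hlim : Tendsto (fun t : ℝ => lam * t ^ (p i - 1))
        (nhdsWithin 0 (Set.Ioi 0)) (nhds 0) := by
      have hcont : Tendsto (fun t : ℝ => t ^ (p i - 1)) (nhds 0) (nhds 0) := by
        have := (Real.continuousAt_rpow_const 0 (p i - 1) (Or.inr (by linarith))).tendsto
        rwa [Real.zero_rpow (by intro h; linarith [h] : p i - 1 ≠ 0)] at this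
      have h2 := (hcont.const_mul lam).mono_left
        (nhdsWithin_le_nhds (s := Set.Ioi (0:ℝ)))
      simpa using h2
    have hle : g j ≤ 0 :=
      ge_of_tendsto hlim (eventually_nhdsWithin_of_forall fun t ht => hub t ht)
    have hgj : g j = 0 := le_antisymm hle hgj0
    rw [hgj, haz, Real.zero_rpow (by intro h; linarith [h] : p i - 1 ≠ 0), mul_zero]
  · -- case 0 < a
    have hmin : IsLocalMin φ 0 := by
      refine Filter.Eventually.of_forall fun t => ?_
      rw [hφzero]; exact hφ0 t
    have hd1 : HasDerivAt (fun t : ℝ => a + t) 1 0 := by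
      simpa using (hasDerivAt_id (0:ℝ)).const_add a
    have hd2 : HasDerivAt (fun s : ℝ => s ^ p i) (p i * a ^ (p i - 1)) a :=
      Real.hasDerivAt_rpow_const (Or.inl (ne_of_gt hA))
    have hd3 : HasDerivAt (fun t : ℝ => (a + t) ^ p i) (p i * a ^ (p i - 1)) 0 := by
      have := HasDerivAt.comp (0:ℝ) (by simpa using hd2) hd1
      rwa [mul_one] at this
    have hd4 : HasDerivAt (fun t : ℝ => C + (a + t) ^ p i) (p i * a ^ (p i - 1)) 0 :=
      hd3.const_add C
    have hd5 : HasDerivAt (fun s : ℝ => s ^ (1 / p i))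
        ((1 / p i) * (1:ℝ) ^ (1 / p i - 1)) 1 :=
      Real.hasDerivAt_rpow_const (Or.inl one_ne_zero)
    have hd6 : HasDerivAt (fun t : ℝ => (C + (a + t) ^ p i) ^ (1 / p i))
        (a ^ (p i - 1)) 0 := by
      have hpt : C + (a + (0:ℝ)) ^ p i = 1 := by rw [add_zero]; exact hCa
      have hd5' : HasDerivAt (fun s : ℝ => s ^ (1 / p i))
          ((1 / p i) * (1:ℝ) ^ (1 / p i - 1)) (C + (a + (0:ℝ)) ^ p i) := by
        rw [hpt]; exact hd5
      have := HasDerivAt.comp (0:ℝ) hd5' hd4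
      have heq : (1 / p i) * (1:ℝ) ^ (1 / p i - 1) * (p i * a ^ (p i - 1))
          = a ^ (p i - 1) := by
        rw [Real.one_rpow]
        field_simp
      rwa [heq] at this
    have hd7 : HasDerivAt (fun t : ℝ => (C + |a + t| ^ p i) ^ (1 / p i))
        (a ^ (p i - 1)) 0 := by
      refine hd6.congr_of_eventuallyEq ?_
      have hev : ∀ᶠ t : ℝ in nhds 0, |t| < a := by
        have : Tendsto (fun t : ℝ => |t|) (nhds 0) (nhds 0) := by
          simpa using continuous_abs.tendsto (0:ℝ)
        exact this.eventually_lt_const hA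
      filter_upwards [hev] with t ht
      rw [abs_of_pos (by cases abs_lt.mp ht; linarith)]
    have hd8 : HasDerivAt φ (lam * a ^ (p i - 1) - g j) 0 := by
      have h9 : HasDerivAt (fun t : ℝ => lam + t * g j) (g j) 0 :=
        (hasDerivAt_mul_const (g j)).const_add lam
      exact (hd7.const_mul lam).sub h9
    have := hmin.hasDerivAt_eq_zero hd8
    linarith [this]

end Aux

/-- a nonnegative nonzero tensor has a nonnegative singular vector
`x* ∈ S^d_+` with `Q(x*) = ‖f‖_{p_1,…,p_m}`. -/
theorem statement_8 {m : ℕ} {d : Fin m → ℕ} (hm : 2 ≤ m) (hd : ∀ k, 0 < d k)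
    (p : Fin m → ℝ) (hp : ∀ k, 1 < p k)
    (f : (∀ i, Fin (d i)) → ℝ) (hf0 : ∀ j, 0 ≤ f j) (hf : f ≠ 0) :
    ∃ (lam : ℝ) (x : ∀ l, Fin (d l) → ℝ),
      (∀ l jl, 0 ≤ x l jl) ∧ IsSingular f p lam x ∧ Qform f p x = tnorm f p := by
  have hpq : ∀ i, (0:ℝ) < p i := fun i => lt_trans one_pos (hp i)
  obtain ⟨j0, hj0⟩ : ∃ j, 0 < f j := by
    by_contra h
    push_neg at h
    exact hf (funext fun j => le_antisymm (h j) (hf0 j))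
  obtain ⟨x, hx0, hxn, hmax⟩ := exists_maximizer hp f j0
  set lam := form f x with hlam
  have hbound := form_le_bound hp hf0 hx0 hmax
  have hlampos : 0 < lam := by
    have h1 : form f (fun i k => if k = j0 i then 1 else 0) = f j0 := by
      rw [form, Finset.sum_eq_single j0]
      · simp
      · intro b _ hb
        have hbne : ∃ i, b i ≠ j0 i := by
          by_contra hc; push_neg at hc; exact hb (funext hc)
        obtain ⟨i, hi⟩ := hbne
        rw [Finset.prod_eq_zero (Finset.mem_univ i)
          (show (if b i = j0 i then (1:ℝ) else 0) = 0 from if_neg hi), mul_zero]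
      · intro h; exact absurd (Finset.mem_univ _) h
    have h2 := hmax (fun i k => if k = j0 i then 1 else 0)
      (fun i k => by positivity) (fun i => pnorm_indicator (hpq i) (j0 i))
    rw [h1] at h2
    exact lt_of_lt_of_le hj0 h2
  have hgrad : ∀ i j, grad f i x j = lam * (x i j) ^ (p i - 1) :=
    grad_eq hp hf0 hx0 hxn (by rw [← hlam] at hbound; exact hbound)
  have hQ : Qform f p x = lam := by
    rw [Qform, ← hlam, abs_of_pos hlampos,
      Finset.prod_eq_one (fun i _ => hxn i), div_one]
  refine ⟨lam, x, hx0, ⟨hxn, ?_⟩, ?_⟩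
  · -- singular vector equations
    intro i ji
    have hne : p i - 1 ≠ 0 := by have := hp i; intro h; linarith
    have hce : conjExp (p i) - 1 = 1 / (p i - 1) := by
      rw [conjExp]; field_simp; ring
    simp only [sigma, psi]
    rw [← hlam, Real.sign_of_pos hlampos, one_mul, hgrad i ji, hce]
    rcases eq_or_lt_of_le (hx0 i ji) with h0 | h0
    · rw [← h0, Real.zero_rpow hne, mul_zero]
      simp
    · have hpos : 0 < lam * x i ji ^ (p i - 1) :=
        mul_pos hlampos (Real.rpow_pos_of_pos h0 _)
      rw [Real.sign_of_pos hpos, mul_one, abs_of_pos hpos,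
        Real.mul_rpow (le_of_lt hlampos) (le_of_lt (Real.rpow_pos_of_pos h0 _)),
        ← Real.rpow_mul (le_of_lt h0), mul_one_div_cancel hne, Real.rpow_one]
  · -- Qform = tnorm
    rw [hQ, tnorm]
    have hxne : ∀ i, x i ≠ 0 := by
      intro i hzero
      have := hxn i
      rw [hzero, (pnorm_eq_zero_iff (hpq i)).mpr rfl] at this
      norm_num at this
    have hmem : lam ∈ {q : ℝ | ∃ z : ∀ i, Fin (d i) → ℝ,
        (∀ i, z i ≠ 0) ∧ q = Qform f p z} := ⟨x, hxne, hQ.symm⟩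
    have hub : ∀ q ∈ {q : ℝ | ∃ z : ∀ i, Fin (d i) → ℝ,
        (∀ i, z i ≠ 0) ∧ q = Qform f p z}, q ≤ lam := by
      rintro q ⟨z, hz, rfl⟩
      have hP : 0 < ∏ i, pnorm (p i) (z i) :=
        Finset.prod_pos fun i _ => pnorm_pos_of_ne_zero (hpq i) (hz i)
      rw [Qform, div_le_iff₀ hP]
      rw [← hlam] at hbound
      calc |form f z| ≤ lam * ∏ i, pnorm (p i) (z i) := hbound z
        _ = lam * ∏ i, pnorm (p i) (z i) := rfl
    exact (le_antisymm (csSup_le ⟨lam, hmem⟩ hub) (le_csSup ⟨lam, hub⟩ hmem)).symm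

end TensorPF
end
end

section
/- Let f ∈ ℝ^{d_1×…×d_m} be a nonnegative weakly irreducible tensor, 1 < p_1,…,p_m < ∞, i ∈ [m], and x, y ∈ ℝ^{d−d_i} with 0 < x ≤ y entrywise and x ≠ y. Define J_ν := {j_ν ∈ [d_ν] : x_{ν,j_ν} = y_{ν,j_ν}} for ν ∈ [m]\{i}, J_i := {j_i ∈ [d_i] : (ψ_{p_i'}(∇_i f(x)))_{j_i} = (ψ_{p_i'}(∇_i f(y)))_{j_i}}, I_ν := {j_ν ∈ [d_ν] : s_{i,ν,j_ν}(x) = s_{i,ν,j_ν}(y)} for ν ∈ [m]\{i}, I_i := J_i, and set J := ∪_{ν∈[m]} {ν}×J_ν and I := ∪_{ν∈[m]} {ν}×I_ν. Then I ⊆ J, and if J ≠ ∅ then I ≠ J. -/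
/-!
Common setup: tensors `f : (∀ i, Fin (d i)) → ℝ`, the induced multilinear form,
partial gradients, `ψ_q`, `ℓ^p` norms, Hölder conjugates, singular vectors,
(weak) irreducibility, the maps `σ_i`, `s_{i,k}`, `T_α`, `G`, the quantities
`Q`, `‖f‖_{p_1,…,p_m}`, `Q_i`, `γ_i^±` and the Hilbert-type metric `μ`.
Points of `ℝ^{d-d_i}` are encoded as full tuples (the maps involved do not
depend on the `i`-th component), with conditions imposed only for `k ≠ i`.
-/

open Finset Filter

noncomputable section

namespace TensorPF

variable {m : ℕ} {d : Fin m → ℕ}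

section Helpers
lemma grad_apply (f : (∀ l, Fin (d l)) → ℝ) (k : Fin m) (x : ∀ l, Fin (d l) → ℝ)
    (jk : Fin (d k)) :
    grad f k x jk = ∑ j : ∀ l, Fin (d l),
      if j k = jk then f j * ∏ l ∈ Finset.univ.erase k, x l (j l) else 0 := by
  unfold grad form
  refine Finset.sum_congr rfl fun j _ => ?_
  rw [← Finset.mul_prod_erase Finset.univ _ (Finset.mem_univ k)]
  rw [Function.update_self]
  rw [Finset.prod_congr rfl
    (fun l hl => by rw [Function.update_of_ne (Finset.ne_of_mem_erase hl)])]
  by_cases h : j k = jk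
  · rw [if_pos h, if_pos h, one_mul]
  · rw [if_neg h, if_neg h, zero_mul, mul_zero]

variable {f : (∀ l, Fin (d l)) → ℝ}

lemma grad_mono (hf0 : ∀ j, 0 ≤ f j) (k : Fin m) {u v : ∀ l, Fin (d l) → ℝ}
    (hpos : ∀ l, l ≠ k → ∀ jl, 0 ≤ u l jl)
    (hle : ∀ l, l ≠ k → ∀ jl, u l jl ≤ v l jl) (jk : Fin (d k)) :
    grad f k u jk ≤ grad f k v jk := by
  rw [grad_apply, grad_apply]
  refine Finset.sum_le_sum fun j _ => ?_
  by_cases h : j k = jk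
  · rw [if_pos h, if_pos h]
    exact mul_le_mul_of_nonneg_left
      (Finset.prod_le_prod (fun l hl => hpos l (Finset.ne_of_mem_erase hl) _)
        (fun l hl => hle l (Finset.ne_of_mem_erase hl) _)) (hf0 j)
  · rw [if_neg h, if_neg h]

lemma grad_lt (hf0 : ∀ j, 0 ≤ f j) (k : Fin m) {u v : ∀ l, Fin (d l) → ℝ}
    (hpos : ∀ l, l ≠ k → ∀ jl, 0 < u l jl)
    (hle : ∀ l, l ≠ k → ∀ jl, u l jl ≤ v l jl)
    {j0 : ∀ l, Fin (d l)} (hj0 : 0 < f j0) {l0 : Fin m} (hl0 : l0 ≠ k)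
    (hlt : u l0 (j0 l0) < v l0 (j0 l0)) :
    grad f k u (j0 k) < grad f k v (j0 k) := by
  rw [grad_apply, grad_apply]
  refine Finset.sum_lt_sum (fun j _ => ?_) ⟨j0, Finset.mem_univ _, ?_⟩
  · by_cases h : j k = j0 k
    · rw [if_pos h, if_pos h]
      exact mul_le_mul_of_nonneg_left
        (Finset.prod_le_prod (fun l hl => (hpos l (Finset.ne_of_mem_erase hl) _).le)
          (fun l hl => hle l (Finset.ne_of_mem_erase hl) _)) (hf0 j)
    · rw [if_neg h, if_neg h]
  · rw [if_pos rfl, if_pos rfl]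
    refine mul_lt_mul_of_pos_left ?_ hj0
    refine Finset.prod_lt_prod (fun l hl => hpos l (Finset.ne_of_mem_erase hl) _)
      (fun l hl => hle l (Finset.ne_of_mem_erase hl) _)
      ⟨l0, Finset.mem_erase.2 ⟨hl0, Finset.mem_univ _⟩, hlt⟩

lemma grad_pos (hf0 : ∀ j, 0 ≤ f j) (k : Fin m) {u : ∀ l, Fin (d l) → ℝ}
    (hpos : ∀ l, l ≠ k → ∀ jl, 0 < u l jl)
    {j0 : ∀ l, Fin (d l)} (hj0 : 0 < f j0) : 0 < grad f k u (j0 k) := by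
  rw [grad_apply]
  refine Finset.sum_pos' (fun j _ => ?_) ⟨j0, Finset.mem_univ _, ?_⟩
  · by_cases h : j k = j0 k
    · rw [if_pos h]
      exact mul_nonneg (hf0 j)
        (Finset.prod_nonneg fun l hl => (hpos l (Finset.ne_of_mem_erase hl) _).le)
    · rw [if_neg h]
  · rw [if_pos rfl]
    exact mul_pos hj0
      (Finset.prod_pos fun l hl => hpos l (Finset.ne_of_mem_erase hl) _)

lemma grad_eq_forces (hf0 : ∀ j, 0 ≤ f j) (k : Fin m) {u v : ∀ l, Fin (d l) → ℝ}
    (hpos : ∀ l, l ≠ k → ∀ jl, 0 < u l jl)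
    (hle : ∀ l, l ≠ k → ∀ jl, u l jl ≤ v l jl)
    {j : ∀ l, Fin (d l)} (hj : 0 < f j)
    (heq : grad f k u (j k) = grad f k v (j k)) :
    ∀ l, l ≠ k → u l (j l) = v l (j l) := by
  intro l hl
  by_contra hne
  exact absurd heq
    (ne_of_lt (grad_lt hf0 k hpos hle hj hl ((hle l hl _).lt_of_ne hne)))

lemma psi_apply_pos {n : ℕ} (q : ℝ) (y : Fin n → ℝ) (j : Fin n) (h : 0 < y j) :
    psi q y j = (y j) ^ (q - 1) := by
  unfold psi
  rw [abs_of_pos h, Real.sign_of_pos h, mul_one]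

lemma conjExp_sub_one_pos {q : ℝ} (h : 1 < q) : 0 < conjExp q - 1 := by
  have h1 : (0:ℝ) < q - 1 := by linarith
  have : conjExp q - 1 = 1 / (q - 1) := by
    unfold conjExp; field_simp; ring
  rw [this]; positivity

lemma rpow_injOn {a b r : ℝ} (ha : 0 < a) (hb : 0 < b) (hr : 0 < r)
    (h : a ^ r = b ^ r) : a = b := by
  rcases lt_trichotomy a b with hlt | he | hgt
  · exact absurd h (ne_of_lt (Real.rpow_lt_rpow ha.le hlt hr))
  · exact he
  · exact absurd h.symm (ne_of_lt (Real.rpow_lt_rpow hb.le hgt hr))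

lemma exists_boundary {V : Type*} {G : SimpleGraph V} (S : Set V) :
    ∀ {a b : V}, G.Walk a b → a ∈ S → b ∉ S →
      ∃ u v, u ∈ S ∧ v ∉ S ∧ G.Adj u v := by
  intro a b w
  induction w with
  | nil => intro ha hb; exact absurd ha hb
  | @cons a c b adj w ih =>
    intro ha hb
    by_cases hc : c ∈ S
    · exact ih hc hb
    · exact ⟨a, c, ha, hc, adj⟩

lemma exists_entry (hm : 2 ≤ m) (hd : ∀ k, 0 < d k)
    (hwirr : WeaklyIrreducible f) (k : Fin m) (jk : Fin (d k)) :
    ∃ j : ∀ l, Fin (d l), j k = jk ∧ 0 < f j := by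
  obtain ⟨k', hk'⟩ : ∃ k' : Fin m, k' ≠ k := by
    have : Nontrivial (Fin m) :=
      ⟨⟨0, by omega⟩, ⟨1, by omega⟩, by simp [Fin.ext_iff]⟩
    exact exists_ne k
  obtain ⟨wlk⟩ := hwirr.preconnected ⟨k, jk⟩ ⟨k', ⟨0, hd k'⟩⟩
  obtain ⟨u, v, hu, hv, hadj⟩ :=
    exists_boundary {a : (l : Fin m) × Fin (d l) | a = ⟨k, jk⟩} wlk rfl
      (fun hmem => hk' (congrArg Sigma.fst (Set.mem_setOf_eq ▸ hmem)))
  rw [Set.mem_setOf_eq] at hu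
  subst hu
  obtain ⟨-, j, hj1, -, hj3⟩ := hadj
  exact ⟨j, hj1, hj3⟩

end Helpers

/-- the comparison lemma for the sets `I` and `J` associated to
`0 < x ≤ y`, `x ≠ y` in `ℝ^{d-d_i}` (encoded as full tuples; the `i`-th
vertices `(i,j_i)` carry the condition on `ψ_{p_i'}(∇_i f(·))`). -/
theorem statement_12 {m : ℕ} {d : Fin m → ℕ} (hm : 2 ≤ m) (hd : ∀ k, 0 < d k)
    (p : Fin m → ℝ) (hp : ∀ k, 1 < p k)
    (f : (∀ i, Fin (d i)) → ℝ) (hf0 : ∀ j, 0 ≤ f j)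
    (hwirr : WeaklyIrreducible f) (i : Fin m)
    (x y : ∀ l, Fin (d l) → ℝ)
    (hxpos : ∀ l, l ≠ i → ∀ jl, 0 < x l jl)
    (hxy : ∀ l, l ≠ i → ∀ jl, x l jl ≤ y l jl)
    (hne : ∃ l, l ≠ i ∧ x l ≠ y l) :
    (({a : (l : Fin m) × Fin (d l) |
        if h : a.1 = i then
          psi (conjExp (p i)) (grad f i x) (Fin.cast (congrArg d h) a.2) =
            psi (conjExp (p i)) (grad f i y) (Fin.cast (congrArg d h) a.2)
        else sik f p i a.1 x a.2 = sik f p i a.1 y a.2}) ⊆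
      ({a : (l : Fin m) × Fin (d l) |
        if h : a.1 = i then
          psi (conjExp (p i)) (grad f i x) (Fin.cast (congrArg d h) a.2) =
            psi (conjExp (p i)) (grad f i y) (Fin.cast (congrArg d h) a.2)
        else x a.1 a.2 = y a.1 a.2})) ∧
    (Set.Nonempty ({a : (l : Fin m) × Fin (d l) |
        if h : a.1 = i then
          psi (conjExp (p i)) (grad f i x) (Fin.cast (congrArg d h) a.2) =
            psi (conjExp (p i)) (grad f i y) (Fin.cast (congrArg d h) a.2)
        else x a.1 a.2 = y a.1 a.2}) →
      ({a : (l : Fin m) × Fin (d l) |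
        if h : a.1 = i then
          psi (conjExp (p i)) (grad f i x) (Fin.cast (congrArg d h) a.2) =
            psi (conjExp (p i)) (grad f i y) (Fin.cast (congrArg d h) a.2)
        else sik f p i a.1 x a.2 = sik f p i a.1 y a.2}) ≠
      ({a : (l : Fin m) × Fin (d l) |
        if h : a.1 = i then
          psi (conjExp (p i)) (grad f i x) (Fin.cast (congrArg d h) a.2) =
            psi (conjExp (p i)) (grad f i y) (Fin.cast (congrArg d h) a.2)
        else x a.1 a.2 = y a.1 a.2})) := by
  classical
  have hent := exists_entry hm hd hwirr (f := f)
  have hri : 0 < conjExp (p i) - 1 := conjExp_sub_one_pos (hp i)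
  have hypos : ∀ l, l ≠ i → ∀ jl, 0 < y l jl :=
    fun l hl jl => lt_of_lt_of_le (hxpos l hl jl) (hxy l hl jl)
  have hgx : ∀ ji, 0 < grad f i x ji := by
    intro ji
    obtain ⟨j, hj1, hj2⟩ := hent i ji
    have := grad_pos hf0 i hxpos hj2
    rwa [hj1] at this
  have hgy : ∀ ji, 0 < grad f i y ji := by
    intro ji
    obtain ⟨j, hj1, hj2⟩ := hent i ji
    have := grad_pos hf0 i hypos hj2
    rwa [hj1] at this
  have hgle : ∀ ji, grad f i x ji ≤ grad f i y ji :=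
    fun ji => grad_mono hf0 i (fun l hl jl => (hxpos l hl jl).le) hxy ji
  have hpsix : ∀ ji, psi (conjExp (p i)) (grad f i x) ji
      = (grad f i x ji) ^ (conjExp (p i) - 1) :=
    fun ji => psi_apply_pos _ _ _ (hgx ji)
  have hpsiy : ∀ ji, psi (conjExp (p i)) (grad f i y) ji
      = (grad f i y ji) ^ (conjExp (p i) - 1) :=
    fun ji => psi_apply_pos _ _ _ (hgy ji)
  have hpsixpos : ∀ ji, 0 < psi (conjExp (p i)) (grad f i x) ji := by
    intro ji; rw [hpsix]; exact Real.rpow_pos_of_pos (hgx ji) _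
  have hpsiypos : ∀ ji, 0 < psi (conjExp (p i)) (grad f i y) ji := by
    intro ji; rw [hpsiy]; exact Real.rpow_pos_of_pos (hgy ji) _
  have hpsile : ∀ ji, psi (conjExp (p i)) (grad f i x) ji
      ≤ psi (conjExp (p i)) (grad f i y) ji := by
    intro ji; rw [hpsix, hpsiy]
    exact Real.rpow_le_rpow (hgx ji).le (hgle ji) hri.le
  have hpsi_eq : ∀ ji, psi (conjExp (p i)) (grad f i x) ji
      = psi (conjExp (p i)) (grad f i y) ji → grad f i x ji = grad f i y ji := by
    intro ji h
    rw [hpsix, hpsiy] at h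
    exact rpow_injOn (hgx ji) (hgy ji) hri h
  have hpsi_lt : ∀ ji, grad f i x ji < grad f i y ji →
      psi (conjExp (p i)) (grad f i x) ji < psi (conjExp (p i)) (grad f i y) ji := by
    intro ji h
    rw [hpsix, hpsiy]
    exact Real.rpow_lt_rpow (hgx ji).le h hri
  -- the updated tuples
  set A := Function.update x i (psi (conjExp (p i)) (grad f i x)) with hAdef
  set B := Function.update y i (psi (conjExp (p i)) (grad f i y)) with hBdef
  have hApos : ∀ l jl, 0 < A l jl := by
    intro l jl
    rw [hAdef]
    by_cases hl : l = i
    · subst hl; rw [Function.update_self]; exact hpsixpos jl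
    · rw [Function.update_of_ne hl]; exact hxpos l hl jl
  have hBpos : ∀ l jl, 0 < B l jl := by
    intro l jl
    rw [hBdef]
    by_cases hl : l = i
    · subst hl; rw [Function.update_self]; exact hpsiypos jl
    · rw [Function.update_of_ne hl]; exact hypos l hl jl
  have hABle : ∀ l jl, A l jl ≤ B l jl := by
    intro l jl
    rw [hAdef, hBdef]
    by_cases hl : l = i
    · subst hl; rw [Function.update_self, Function.update_self]; exact hpsile jl
    · rw [Function.update_of_ne hl, Function.update_of_ne hl]; exact hxy l hl jl
  have hgA : ∀ (k : Fin m) (jk : Fin (d k)), 0 < grad f k A jk := by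
    intro k jk
    obtain ⟨j, hj1, hj2⟩ := hent k jk
    have := grad_pos hf0 k (fun l _ jl => hApos l jl) hj2
    rwa [hj1] at this
  have hgB : ∀ (k : Fin m) (jk : Fin (d k)), 0 < grad f k B jk := by
    intro k jk
    obtain ⟨j, hj1, hj2⟩ := hent k jk
    have := grad_pos hf0 k (fun l _ jl => hBpos l jl) hj2
    rwa [hj1] at this
  have hsikx : ∀ (k : Fin m) (jk : Fin (d k)),
      sik f p i k x jk = (grad f k A jk) ^ (conjExp (p k) - 1) := by
    intro k jk
    rw [show sik f p i k x jk = psi (conjExp (p k)) (grad f k A) jk from rfl]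
    exact psi_apply_pos _ _ _ (hgA k jk)
  have hsiky : ∀ (k : Fin m) (jk : Fin (d k)),
      sik f p i k y jk = (grad f k B jk) ^ (conjExp (p k) - 1) := by
    intro k jk
    rw [show sik f p i k y jk = psi (conjExp (p k)) (grad f k B) jk from rfl]
    exact psi_apply_pos _ _ _ (hgB k jk)
  have hsik_eq : ∀ (k : Fin m) (jk : Fin (d k)),
      sik f p i k x jk = sik f p i k y jk → grad f k A jk = grad f k B jk := by
    intro k jk h
    rw [hsikx, hsiky] at h
    exact rpow_injOn (hgA k jk) (hgB k jk) (conjExp_sub_one_pos (hp k)) h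
  constructor
  · -- I ⊆ J
    rintro ⟨k, jk⟩ hmem
    simp only [Set.mem_setOf_eq] at hmem ⊢
    by_cases hk : k = i
    · rw [dif_pos hk] at hmem ⊢; exact hmem
    · rw [dif_neg hk] at hmem ⊢
      obtain ⟨j0, hj0k, hj0f⟩ := hent k jk
      have hgradeq : grad f k A (j0 k) = grad f k B (j0 k) := by
        rw [hj0k]; exact hsik_eq k jk hmem
      have hforce := grad_eq_forces hf0 k (fun l _ jl => hApos l jl)
        (fun l _ jl => hABle l jl) hj0f hgradeq
      have h1 : psi (conjExp (p i)) (grad f i x) (j0 i)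
          = psi (conjExp (p i)) (grad f i y) (j0 i) := by
        have := hforce i (Ne.symm hk)
        rwa [hAdef, hBdef, Function.update_self, Function.update_self] at this
      have h2 := hpsi_eq _ h1
      have hforce2 := grad_eq_forces hf0 i hxpos hxy hj0f h2
      have := hforce2 k hk
      rwa [hj0k] at this
  · -- J nonempty → I ≠ J
    intro _ hIJ
    -- find a vertex outside J
    obtain ⟨l1, hl1, hxyne⟩ := hne
    obtain ⟨j1, hj1⟩ : ∃ j1, x l1 j1 ≠ y l1 j1 := Function.ne_iff.1 hxyne
    have hb : (⟨l1, j1⟩ : (l : Fin m) × Fin (d l)) ∉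
        {a : (l : Fin m) × Fin (d l) |
          if h : a.1 = i then
            psi (conjExp (p i)) (grad f i x) (Fin.cast (congrArg d h) a.2) =
              psi (conjExp (p i)) (grad f i y) (Fin.cast (congrArg d h) a.2)
          else x a.1 a.2 = y a.1 a.2} := by
      simp only [Set.mem_setOf_eq]
      rw [dif_neg hl1]
      exact hj1
    -- J is nonempty by assumption; get a boundary edge
    obtain ⟨a0, ha0⟩ := ‹Set.Nonempty _›
    obtain ⟨wlk⟩ := hwirr.preconnected a0 ⟨l1, j1⟩
    obtain ⟨u, v, hu, hv, hadj⟩ := exists_boundary _ wlk ha0 hb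
    obtain ⟨huv, j, hju, hjv, hjf⟩ := hadj
    obtain ⟨k, jk⟩ := u
    obtain ⟨l, jl⟩ := v
    simp only [Set.mem_setOf_eq] at hu hv
    simp only at huv hju hjv
    by_cases hk : k = i
    · -- u in the i-th part: direct contradiction
      subst hk
      rw [dif_pos rfl] at hu
      have hgeq : grad f k x jk = grad f k y jk := hpsi_eq jk hu
      rw [← hju] at hgeq
      have hforce := grad_eq_forces hf0 k hxpos hxy hjf hgeq
      have hl : l ≠ k := fun h => huv h.symm
      have := hforce l hl
      rw [hjv] at this
      rw [dif_neg (show ¬ l = k from hl)] at hv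
      exact hv this
    · -- u in part k ≠ i
      rw [dif_neg hk] at hu
      -- u ∈ J = I, so sik equal at (k, jk)
      have huI : sik f p i k x jk = sik f p i k y jk := by
        have : (⟨k, jk⟩ : (l : Fin m) × Fin (d l)) ∈
            {a : (l : Fin m) × Fin (d l) |
              if h : a.1 = i then
                psi (conjExp (p i)) (grad f i x) (Fin.cast (congrArg d h) a.2) =
                  psi (conjExp (p i)) (grad f i y) (Fin.cast (congrArg d h) a.2)
              else sik f p i a.1 x a.2 = sik f p i a.1 y a.2} := by
          rw [hIJ]
          simp only [Set.mem_setOf_eq]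
          rw [dif_neg hk]
          exact hu
        simp only [Set.mem_setOf_eq] at this
        rwa [dif_neg hk] at this
      have hgradeq : grad f k A jk = grad f k B jk := hsik_eq k jk huI
      -- strict increase at coordinate (l, jl)
      have hlk : l ≠ k := fun h => huv h.symm
      have hlt : A l (j l) < B l (j l) := by
        by_cases hl : l = i
        · subst hl
          rw [dif_pos rfl] at hv
          have hcast : ∀ pf : d l = d l, Fin.cast pf jl = jl := fun _ => rfl
          rw [hcast] at hv
          have : grad f l x jl < grad f l y jl :=
            (hgle jl).lt_of_ne (fun h => hv (by rw [hpsix, hpsiy, h]))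
          rw [hAdef, hBdef, Function.update_self, Function.update_self, hjv]
          exact hpsi_lt jl this
        · rw [dif_neg hl] at hv
          rw [hAdef, hBdef, Function.update_of_ne hl, Function.update_of_ne hl, hjv]
          exact (hxy l hl jl).lt_of_ne hv
      have := grad_lt hf0 k (fun l' _ jl' => hApos l' jl')
        (fun l' _ jl' => hABle l' jl') hjf hlk hlt
      rw [hju] at this
      exact absurd hgradeq (ne_of_lt this)

end TensorPF
end
end
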